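/- arXiv:1403.7388 — 2 statements merged into one kernel-verified Lean document; each statement's English description precedes it below -/
import Mathlib

section
/- The Fresnel integral ∫_0^∞ e(z²) dz, where e(x) = exp(2πix), equals e^{iπ/4}/(2√2). -/
open MeasureTheory intervalIntegral Real Complex Filter
noncomputable section
namespace Fresnel

def f (z : ℂ) : ℂ := Complex.exp (2 * Real.pi * Complex.I * z ^ 2)

def ω : ℂ := Complex.exp (Complex.I * Real.pi / 4)

lemma ω_sq : ω ^ 2 = Complex.I := by
  rw [ω, ← Complex.exp_nat_mul]
  have : (2:ℕ) * (Complex.I * Real.pi / 4) = (Real.pi/2 : ℝ) * Complex.I := by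
    push_cast; ring
  rw [this, Complex.exp_mul_I]
  simp

lemma f_omega (s : ℝ) : f (ω * s) = Real.exp (-(2*Real.pi) * s ^ 2) := by
  rw [f, mul_pow, ω_sq]
  rw [show (2 * Real.pi * Complex.I * (Complex.I * (s:ℂ)^2)) = ((-(2*Real.pi) * s^2 : ℝ) : ℂ) by
    push_cast; ring_nf; rw [Complex.I_sq]; ring]
  exact (Complex.ofReal_exp _).symm

lemma hasDerivAt_f (z : ℂ) :
    HasDerivAt f (2 * Real.pi * Complex.I * (2*z) * f z) z := by
  have h1 : HasDerivAt (fun z : ℂ => 2 * Real.pi * Complex.I * z ^ 2)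
      (2 * Real.pi * Complex.I * (2*z)) z := by
    simpa [mul_comm] using (hasDerivAt_pow 2 z).const_mul (2 * Real.pi * Complex.I)
  have := (Complex.hasDerivAt_exp _).comp z h1
  rw [show (cexp ∘ fun z : ℂ => 2 * Real.pi * Complex.I * z ^ 2) = f from rfl] at this
  refine this.congr_deriv ?_
  rw [f]; ring

lemma norm_f (R t : ℝ) :
    ‖f (R * Complex.exp (t * Complex.I))‖ = Real.exp (-(2*Real.pi) * R^2 * Real.sin (2*t)) := by
  rw [f, Complex.norm_exp]
  congr 1
  have : (2 * Real.pi * Complex.I * ((R:ℂ) * Complex.exp (t * Complex.I)) ^ 2)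
      = (2 * Real.pi * R^2 : ℝ) * (Complex.exp (((2*t : ℝ)) * Complex.I) * Complex.I) := by
    rw [mul_pow, ← Complex.exp_nat_mul]
    push_cast; ring_nf
  rw [this]
  rw [Complex.re_ofReal_mul]
  have h2 : (Complex.exp ((2*t : ℝ) * Complex.I) * Complex.I).re = - Real.sin (2*t) := by
    simp only [Complex.mul_re, Complex.mul_im, Complex.I_re, Complex.I_im, mul_zero, mul_one,
      zero_sub, neg_inj, zero_mul, sub_zero, add_zero, zero_add]
    rw [Complex.exp_ofReal_mul_I_im]
  rw [h2]; ring

end Fresnel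

namespace Fresnel
open Fresnel

lemma continuous_f : Continuous f :=
  Complex.continuous_exp.comp (by continuity)

/-- the arc integrand -/
def F (R t : ℝ) : ℂ :=
  f ((R:ℂ) * Complex.exp (t * Complex.I)) * (Complex.I * R * Complex.exp (t * Complex.I))

/-- derivative of `F` in `R` -/
def D (R t : ℝ) : ℂ :=
  (2 * Real.pi * Complex.I * (2 * ((R:ℂ) * Complex.exp (t * Complex.I)))
      * f ((R:ℂ) * Complex.exp (t * Complex.I)))
    * (Complex.exp (t * Complex.I) * (Complex.I * R * Complex.exp (t * Complex.I)))
  + f ((R:ℂ) * Complex.exp (t * Complex.I)) * (Complex.I * Complex.exp (t * Complex.I))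

lemma hasDerivAt_F_R (R t : ℝ) : HasDerivAt (fun R : ℝ => F R t) (D R t) R := by
  set e := Complex.exp (t * Complex.I) with he
  have h1 : HasDerivAt (fun w : ℂ => f (w * e))
      (2 * Real.pi * Complex.I * (2 * ((R:ℂ) * e)) * f ((R:ℂ)*e) * e) ((R:ℂ)) := by
    have hg : HasDerivAt (fun w : ℂ => w * e) e ((R:ℂ)) := by
      simpa using (hasDerivAt_id ((R:ℂ))).mul_const e
    have := (hasDerivAt_f ((R:ℂ)*e)).comp ((R:ℂ)) hg
    exact this
  have h2 : HasDerivAt (fun w : ℂ => Complex.I * w * e) (Complex.I * e) ((R:ℂ)) := by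
    simpa using (((hasDerivAt_id ((R:ℂ))).const_mul Complex.I).mul_const e)
  have h3 := (h1.mul h2).comp_ofReal (z := R)
  refine h3.congr_deriv ?_
  rw [D]; ring

lemma hasDerivAt_F_t (R t : ℝ) :
    HasDerivAt (fun t : ℝ => f ((R:ℂ) * Complex.exp (t * Complex.I))
      * Complex.exp (t * Complex.I)) (D R t) t := by
  have h0 : HasDerivAt (fun t : ℝ => (t:ℂ) * Complex.I) Complex.I t := by
    simpa using ((hasDerivAt_id ((t:ℂ))).mul_const Complex.I).comp_ofReal (z := t)
  have h1 : HasDerivAt (fun w : ℂ => f ((R:ℂ) * Complex.exp w) * Complex.exp w)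
      ((2 * Real.pi * Complex.I * (2 * ((R:ℂ) * Complex.exp ((t:ℂ)*Complex.I)))
          * f ((R:ℂ) * Complex.exp ((t:ℂ)*Complex.I)) * ((R:ℂ) * Complex.exp ((t:ℂ)*Complex.I)))
        * Complex.exp ((t:ℂ)*Complex.I)
       + f ((R:ℂ) * Complex.exp ((t:ℂ)*Complex.I)) * Complex.exp ((t:ℂ)*Complex.I))
      ((t:ℂ) * Complex.I) := by
    have hi : HasDerivAt (fun w : ℂ => (R:ℂ) * Complex.exp w)
        ((R:ℂ) * Complex.exp ((t:ℂ)*Complex.I)) ((t:ℂ)*Complex.I) :=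
      (Complex.hasDerivAt_exp _).const_mul _
    exact ((hasDerivAt_f _).comp _ hi).mul (Complex.hasDerivAt_exp _)
  have h2 := h1.comp t h0
  refine h2.congr_deriv ?_
  rw [D]; ring

end Fresnel

namespace Fresnel

lemma norm_f_le {R t : ℝ} (ht0 : 0 ≤ t) (ht : t ≤ Real.pi/4) :
    ‖f ((R:ℂ) * Complex.exp (t * Complex.I))‖ ≤ 1 := by
  rw [norm_f, Real.exp_le_one_iff]
  have hs : 0 ≤ Real.sin (2*t) := by
    apply Real.sin_nonneg_of_nonneg_of_le_pi (by linarith)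
    nlinarith [Real.pi_pos]
  nlinarith [sq_nonneg R, Real.pi_pos, mul_nonneg (sq_nonneg R) hs]

lemma norm_cexp_tI (t : ℝ) : ‖Complex.exp ((t:ℂ) * Complex.I)‖ = 1 := by
  rw [Complex.norm_exp]
  simp

lemma norm_D_le (R : ℝ) {t : ℝ} (ht0 : 0 ≤ t) (ht : t ≤ Real.pi/4) :
    ‖D R t‖ ≤ 4*Real.pi*R^2 + 1 := by
  have hf := norm_f_le (R := R) ht0 ht
  have hf0 : (0:ℝ) ≤ ‖f ((R:ℂ) * Complex.exp (t * Complex.I))‖ := norm_nonneg _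
  have he := norm_cexp_tI t
  calc ‖D R t‖ ≤ ‖(2 * Real.pi * Complex.I * (2 * ((R:ℂ) * Complex.exp (t * Complex.I)))
      * f ((R:ℂ) * Complex.exp (t * Complex.I)))
    * (Complex.exp (t * Complex.I) * (Complex.I * R * Complex.exp (t * Complex.I)))‖
    + ‖f ((R:ℂ) * Complex.exp (t * Complex.I)) * (Complex.I * Complex.exp (t * Complex.I))‖ :=
      norm_add_le _ _
  _ ≤ 4*Real.pi*R^2 + 1 := by
      simp only [norm_mul, he, Complex.norm_I, Complex.norm_real, Complex.norm_ofNat,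
        Real.norm_eq_abs, mul_one, one_mul, Complex.norm_natCast]
      have : |Real.pi| = Real.pi := abs_of_pos Real.pi_pos
      rw [this]
      set x := ‖f ((R:ℂ) * Complex.exp (t * Complex.I))‖ with hx
      have habs : |R| * |R| = R^2 := by rw [← _root_.sq_abs R]; ring
      have key : 2*Real.pi*(2*|R|)*x*|R| = 4*Real.pi*R^2*x := by rw [← habs]; ring
      rw [key]
      nlinarith [mul_nonneg (by positivity : (0:ℝ) ≤ 4*Real.pi*R^2) (sub_nonneg.2 hf)]

lemma continuous_F (R : ℝ) : Continuous fun t : ℝ => F R t := by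
  unfold F
  exact ((continuous_f.comp (by continuity)).mul (by continuity))

lemma continuous_D (R : ℝ) : Continuous fun t : ℝ => D R t := by
  unfold D
  apply Continuous.add
  · exact ((by continuity : Continuous fun t : ℝ =>
      2 * (Real.pi:ℂ) * Complex.I * (2 * ((R:ℂ) * Complex.exp ((t:ℂ) * Complex.I)))).mul
      (continuous_f.comp (by continuity))).mul (by continuity)
  · exact (continuous_f.comp (by continuity)).mul (by continuity)

def arc (R : ℝ) : ℂ := ∫ t in (0:ℝ)..(Real.pi/4), F R t

lemma exp_pi_quarter : Complex.exp ((Real.pi : ℂ)/4 * Complex.I) = ω := by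
  rw [ω]; congr 1; ring

lemma integral_D (R : ℝ) :
    ∫ t in (0:ℝ)..(Real.pi/4), D R t = f ((R:ℂ)*ω) * ω - f R := by
  have h := intervalIntegral.integral_eq_sub_of_hasDerivAt
    (f := fun t : ℝ => f ((R:ℂ) * Complex.exp ((t:ℂ) * Complex.I)) * Complex.exp ((t:ℂ) * Complex.I))
    (f' := fun t => D R t) (a := (0:ℝ)) (b := Real.pi/4)
    (fun t _ => hasDerivAt_F_t R t) ((continuous_D R).intervalIntegrable _ _)
  rw [h]
  simp [exp_pi_quarter]

lemma hasDerivAt_arc (R₀ : ℝ) :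
    HasDerivAt arc (f ((R₀:ℂ)*ω) * ω - f R₀) R₀ := by
  have key := intervalIntegral.hasDerivAt_integral_of_dominated_loc_of_deriv_le
    (F := F) (F' := D) (x₀ := R₀) (a := 0) (b := Real.pi/4) (μ := volume)
    (bound := fun _ => 4*Real.pi*(|R₀|+1)^2 + 1) (s := Metric.ball R₀ 1) (Metric.ball_mem_nhds R₀ one_pos)
    (Filter.Eventually.of_forall fun R => (continuous_F R).aestronglyMeasurable)
    ((continuous_F R₀).intervalIntegrable _ _)
    (continuous_D R₀).aestronglyMeasurable
    ?_ (intervalIntegrable_const) ?_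
  · rw [← integral_D R₀]
    exact key.2
  · refine Filter.Eventually.of_forall fun t ht R hR => ?_
    rw [Set.uIoc_of_le (by positivity)] at ht
    refine (norm_D_le R ht.1.le ht.2).trans ?_
    show (4*Real.pi*R^2+1 : ℝ) ≤ 4*Real.pi*(|R₀|+1)^2+1
    have h1 : |R| ≤ |R₀| + 1 := by
      have := abs_sub_abs_le_abs_sub R R₀
      rw [Metric.mem_ball, Real.dist_eq] at hR
      linarith
    nlinarith [Real.pi_pos, pow_le_pow_left₀ (abs_nonneg R) h1 2, _root_.sq_abs R]
  · exact Filter.Eventually.of_forall fun t _ R _ => hasDerivAt_F_R R t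

end Fresnel

namespace Fresnel

lemma continuous_f_real : Continuous fun x : ℝ => f x :=
  continuous_f.comp Complex.continuous_ofReal

lemma continuous_g_real : Continuous fun s : ℝ => f (ω * s) * ω :=
  ((continuous_f.comp (by continuity)).mul continuous_const)

def Φ (R : ℝ) : ℂ := (∫ x in (0:ℝ)..R, f x) + arc R - ∫ s in (0:ℝ)..R, f (ω * s) * ω

lemma hasDerivAt_Φ (R : ℝ) : HasDerivAt Φ 0 R := by
  have h1 : HasDerivAt (fun R : ℝ => ∫ x in (0:ℝ)..R, f x) (f R) R :=
    intervalIntegral.integral_hasDerivAt_right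
      (continuous_f_real.intervalIntegrable _ _)
      (continuous_f_real.stronglyMeasurableAtFilter _ _)
      continuous_f_real.continuousAt
  have h2 : HasDerivAt (fun R : ℝ => ∫ s in (0:ℝ)..R, f (ω * s) * ω) (f (ω * R) * ω) R :=
    intervalIntegral.integral_hasDerivAt_right
      (continuous_g_real.intervalIntegrable _ _)
      (continuous_g_real.stronglyMeasurableAtFilter _ _)
      continuous_g_real.continuousAt
  have h3 := (h1.add (hasDerivAt_arc R)).sub h2
  refine h3.congr_deriv ?_
  rw [mul_comm ((R:ℂ)) ω]
  ring

lemma Φ_eq_zero (R : ℝ) : Φ R = 0 := by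
  have hc : Φ R = Φ 0 :=
    is_const_of_deriv_eq_zero (fun x => (hasDerivAt_Φ x).differentiableAt)
      (fun x => (hasDerivAt_Φ x).deriv) R 0
  rw [hc, Φ]
  simp [arc, F]

lemma contour (R : ℝ) :
    (∫ x in (0:ℝ)..R, f x) = (∫ s in (0:ℝ)..R, f (ω * s) * ω) - arc R := by
  have := Φ_eq_zero R
  rw [Φ] at this
  linear_combination this

end Fresnel

namespace Fresnel

lemma sqrt_fact : Real.sqrt (Real.pi / (2*Real.pi)) / 2 = 1 / (2 * Real.sqrt 2) := by
  have h : Real.pi / (2*Real.pi) = 1/2 := by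
    rw [div_eq_iff (by positivity)]; ring
  rw [h]
  rw [show (1/2 : ℝ) = 2⁻¹ by norm_num, Real.sqrt_inv]
  rw [eq_div_iff (by positivity)]
  have h2 : Real.sqrt 2 ≠ 0 := by positivity
  field_simp

lemma tendsto_gauss :
    Filter.Tendsto (fun R : ℝ => ∫ s in (0:ℝ)..R, f (ω * s) * ω) Filter.atTop
      (nhds (ω / (2 * Real.sqrt 2))) := by
  have hrw : ∀ R : ℝ, (∫ s in (0:ℝ)..R, f (ω * s) * ω)
      = ((∫ s in (0:ℝ)..R, Real.exp (-(2*Real.pi) * s ^ 2) : ℝ) : ℂ) * ω := by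
    intro R
    rw [← intervalIntegral.integral_ofReal, ← intervalIntegral.integral_mul_const]
    apply intervalIntegral.integral_congr
    intro s _
    simp only [f_omega]
  have hreal : Filter.Tendsto (fun R : ℝ => ∫ s in (0:ℝ)..R, Real.exp (-(2*Real.pi) * s ^ 2))
      Filter.atTop (nhds (Real.sqrt (Real.pi / (2*Real.pi)) / 2)) := by
    rw [← integral_gaussian_Ioi (2*Real.pi)]
    exact MeasureTheory.intervalIntegral_tendsto_integral_Ioi 0
      ((integrable_exp_neg_mul_sq (by positivity)).integrableOn) Filter.tendsto_id
  have := ((Complex.continuous_ofReal.tendsto _).comp hreal).mul_const ω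
  simp only [Function.comp] at this
  convert this.congr (fun R => (hrw R).symm) using 2
  rw [sqrt_fact]
  push_cast
  rw [div_eq_mul_inv, div_eq_mul_inv]
  ring

lemma norm_F_le {R t : ℝ} (hR : 0 ≤ R) (ht0 : 0 ≤ t) (ht : t ≤ Real.pi/4) :
    ‖F R t‖ ≤ R * Real.exp (-(8*R^2) * t) := by
  rw [F, norm_mul, norm_f]
  have h1 : ‖Complex.I * (R:ℂ) * Complex.exp ((t:ℂ) * Complex.I)‖ = R := by
    rw [norm_mul, norm_mul, norm_cexp_tI, Complex.norm_I, Complex.norm_real, Real.norm_eq_abs,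
      _root_.abs_of_nonneg hR]
    ring
  rw [h1]
  rw [mul_comm]
  apply mul_le_mul_of_nonneg_left _ hR
  apply Real.exp_le_exp.2
  have hsin : 2/Real.pi * (2*t) ≤ Real.sin (2*t) :=
    Real.mul_le_sin (by linarith) (by linarith)
  have hπ : (0:ℝ) < Real.pi := Real.pi_pos
  have h2 : -(2*Real.pi) * R^2 * Real.sin (2*t) ≤ -(2*Real.pi) * R^2 * (2/Real.pi * (2*t)) := by
    apply mul_le_mul_of_nonpos_left hsin
    nlinarith [sq_nonneg R]
  refine h2.trans (le_of_eq ?_)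
  field_simp
  ring

lemma integral_exp_aux (R : ℝ) (hR : 0 < R) :
    ∫ t in (0:ℝ)..(Real.pi/4), Real.exp (-(8*R^2) * t) ≤ 1 / (8*R^2) := by
  have hFTC := intervalIntegral.integral_eq_sub_of_hasDerivAt
    (f := fun t : ℝ => -Real.exp (-(8*R^2) * t) / (8*R^2))
    (f' := fun t : ℝ => Real.exp (-(8*R^2) * t)) (a := (0:ℝ)) (b := Real.pi/4)
    (fun t _ => by
      have h := ((Real.hasDerivAt_exp (-(8*R^2) * t)).comp t
        ((hasDerivAt_id t).const_mul (-(8*R^2))))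
      have h2 := (h.div_const (8*R^2)).neg
      convert h2 using 1
      · ext x; simp [Function.comp, neg_div]
      · show Real.exp (-(8*R^2)*t) = -(Real.exp (-(8*R^2)*t) * (-(8*R^2)*1) / (8*R^2))
        have h3 : (8*R^2 : ℝ) ≠ 0 := by positivity
        have h4 : -(Real.exp (-(8*R^2)*t) * (-(8*R^2)*1) / (8*R^2))
            = Real.exp (-(8*R^2)*t) * ((8*R^2) / (8*R^2)) := by ring
        rw [h4, div_self h3, mul_one])
    ((Real.continuous_exp.comp (by continuity)).intervalIntegrable _ _)
  rw [hFTC]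
  have e1 : (0:ℝ) ≤ Real.exp (-(8*R^2) * (Real.pi/4)) := (Real.exp_pos _).le
  have e2 : Real.exp (-(8*R^2) * 0) = 1 := by norm_num
  show -Real.exp (-(8*R^2) * (Real.pi/4)) / (8*R^2) - -Real.exp (-(8*R^2) * 0) / (8*R^2)
      ≤ 1/(8*R^2)
  rw [e2, neg_div, neg_div]
  have hpos : (0:ℝ) < 8*R^2 := by positivity
  have := div_nonneg e1 hpos.le
  linarith

lemma arc_tendsto : Filter.Tendsto arc Filter.atTop (nhds 0) := by
  rw [tendsto_zero_iff_norm_tendsto_zero]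
  apply squeeze_zero' (Filter.Eventually.of_forall fun R => norm_nonneg _)
  · filter_upwards [Filter.eventually_gt_atTop (0:ℝ)] with R hR
    calc ‖arc R‖ ≤ R * (1 / (8*R^2)) := by
          have h1 : ‖arc R‖ ≤ |∫ t in (0:ℝ)..(Real.pi/4), R * Real.exp (-(8*R^2) * t)| := by
            rw [arc]
            apply intervalIntegral.norm_integral_le_abs_of_norm_le
            · rw [Set.uIoc_of_le (by positivity)]
              exact MeasureTheory.ae_restrict_of_forall_mem measurableSet_Ioc
                (fun t ht => norm_F_le hR.le ht.1.le ht.2)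
            · exact (continuous_const.mul (Real.continuous_exp.comp (by continuity))).intervalIntegrable _ _
          rw [_root_.abs_of_nonneg (intervalIntegral.integral_nonneg (by positivity)
            (fun u _ => by positivity))] at h1
          refine h1.trans ?_
          rw [intervalIntegral.integral_const_mul]
          exact mul_le_mul_of_nonneg_left (integral_exp_aux R hR) hR.le
      _ = 1 / (8*R) := by field_simp
  · have h8 : Filter.Tendsto (fun R : ℝ => 8*R) Filter.atTop Filter.atTop :=
      Filter.tendsto_id.const_mul_atTop (by norm_num)
    exact tendsto_const_nhds.div_atTop h8

end Fresnel

end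

open MeasureTheory intervalIntegral

/-- The Fresnel integral `∫_0^∞ e(z²) dz`, with `e(x) = exp(2πix)`, understood as the
improper Riemann integral `lim_{R→∞} ∫_0^R exp(2πi z²) dz`, equals `e^{iπ/4}/(2√2)`. -/
theorem fresnel_integral_eq :
    Filter.Tendsto
      (fun R : ℝ => ∫ z in (0:ℝ)..R, Complex.exp (2 * Real.pi * Complex.I * (z:ℂ) ^ 2))
      Filter.atTop
      (nhds (Complex.exp (Complex.I * Real.pi / 4) / (2 * Real.sqrt 2))) := by
  have h := Fresnel.tendsto_gauss.sub Fresnel.arc_tendsto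
  rw [sub_zero] at h
  have h2 := h.congr (fun R => (Fresnel.contour R).symm)
  exact h2
end

section
/- Let f : I → ℝ be C² on compact I with c₁ ≤ f''(x) ≤ c₂ for all x (0 < c₁ ≤ c₂), let j/k ∈ f'(I) with x₀ ∈ I satisfying f'(x₀) = j/k, and set β = ‖k f(x₀) − j x₀‖. Then for every x ∈ I with |x − x₀| ≤ √(β/(c₂ k)) one has |k f(x) − j x − (k f(x₀) − j x₀)| ≤ β/2; in particular ‖k f(x) − j x‖ ≥ β/2 for all such x (assuming β ≤ 1/2). -/
open Set

private lemma monoOn_aux {u u' : ℝ → ℝ} {s t : ℝ}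
    (hu : ∀ x ∈ Icc s t, HasDerivAt u (u' x) x)
    (h : ∀ x ∈ Icc s t, 0 ≤ u' x) : MonotoneOn u (Icc s t) := by
  apply monotoneOn_of_deriv_nonneg (convex_Icc s t)
  · exact fun x hx => (hu x hx).continuousAt.continuousWithinAt
  · intro x hx
    rw [interior_Icc] at hx
    exact ((hu x (Ioo_subset_Icc_self hx)).differentiableAt).differentiableWithinAt
  · intro x hx
    rw [interior_Icc] at hx
    rw [(hu x (Ioo_subset_Icc_self hx)).deriv]
    exact h x (Ioo_subset_Icc_self hx)

private lemma antiOn_aux {u u' : ℝ → ℝ} {s t : ℝ}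
    (hu : ∀ x ∈ Icc s t, HasDerivAt u (u' x) x)
    (h : ∀ x ∈ Icc s t, u' x ≤ 0) : AntitoneOn u (Icc s t) := by
  apply antitoneOn_of_deriv_nonpos (convex_Icc s t)
  · exact fun x hx => (hu x hx).continuousAt.continuousWithinAt
  · intro x hx
    rw [interior_Icc] at hx
    exact ((hu x (Ioo_subset_Icc_self hx)).differentiableAt).differentiableWithinAt
  · intro x hx
    rw [interior_Icc] at hx
    rw [(hu x (Ioo_subset_Icc_self hx)).deriv]
    exact h x (Ioo_subset_Icc_self hx)

private lemma max_aux {a b x₀ : ℝ} {g g' : ℝ → ℝ} (hx₀ : x₀ ∈ Icc a b)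
    (hg : ∀ x ∈ Icc a b, HasDerivAt g (g' x) x)
    (hneg : ∀ x ∈ Icc a b, x ≤ x₀ → 0 ≤ g' x)
    (hpos : ∀ x ∈ Icc a b, x₀ ≤ x → g' x ≤ 0) :
    ∀ x ∈ Icc a b, g x ≤ g x₀ := by
  intro x hx
  rcases le_total x x₀ with h | h
  · have hm : MonotoneOn g (Icc a x₀) :=
      monoOn_aux (fun y hy => hg y ⟨hy.1, hy.2.trans hx₀.2⟩)
        (fun y hy => hneg y ⟨hy.1, hy.2.trans hx₀.2⟩ hy.2)
    exact hm ⟨hx.1, h⟩ ⟨hx₀.1, le_refl _⟩ h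
  · have hm : AntitoneOn g (Icc x₀ b) :=
      antiOn_aux (fun y hy => hg y ⟨hx₀.1.trans hy.1, hy.2⟩)
        (fun y hy => hpos y ⟨hx₀.1.trans hy.1, hy.2⟩ hy.1)
    exact hm ⟨le_refl _, hx₀.2⟩ ⟨h, hx.2⟩ h

/-- Near a stationary point the phase stays close to its value there: with `f` of class
`C²` on `[a,b]`, `c₁ ≤ f'' ≤ c₂` (`0 < c₁ ≤ c₂`), `f'(x₀) = j/k` and
`β = ‖k f(x₀) − j x₀‖ ≤ 1/2`, for every `x ∈ [a,b]` with `|x − x₀| ≤ √(β/(c₂k))` one has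
`|k f(x) − jx − (k f(x₀) − j x₀)| ≤ β/2`, and in particular `‖k f(x) − jx‖ ≥ β/2`.
Here `‖y‖ = |y − round y|` is the distance to the nearest integer. -/
theorem phase_near_stationary_point
    (a b c₁ c₂ : ℝ) (hab : a ≤ b) (hc₁ : 0 < c₁) (hc₁c₂ : c₁ ≤ c₂)
    (f f' f'' : ℝ → ℝ) (j k : ℤ) (hk : 0 < k) (x₀ : ℝ)
    (hder1 : ∀ x ∈ Icc a b, HasDerivAt f (f' x) x)
    (hder2 : ∀ x ∈ Icc a b, HasDerivAt f' (f'' x) x)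
    (hbounds : ∀ x ∈ Icc a b, c₁ ≤ f'' x ∧ f'' x ≤ c₂)
    (hx₀ : x₀ ∈ Icc a b) (hstat : f' x₀ = (j : ℝ) / (k : ℝ))
    (hβ : |(k : ℝ) * f x₀ - (j : ℝ) * x₀ -
        round ((k : ℝ) * f x₀ - (j : ℝ) * x₀)| ≤ 1 / 2) :
    ∀ x ∈ Icc a b,
      |x - x₀| ≤ Real.sqrt
          (|(k : ℝ) * f x₀ - (j : ℝ) * x₀ - round ((k : ℝ) * f x₀ - (j : ℝ) * x₀)| /
            (c₂ * (k : ℝ))) →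
        |(k : ℝ) * f x - (j : ℝ) * x - ((k : ℝ) * f x₀ - (j : ℝ) * x₀)| ≤
            |(k : ℝ) * f x₀ - (j : ℝ) * x₀ -
              round ((k : ℝ) * f x₀ - (j : ℝ) * x₀)| / 2 ∧
          |(k : ℝ) * f x₀ - (j : ℝ) * x₀ - round ((k : ℝ) * f x₀ - (j : ℝ) * x₀)| / 2 ≤
            |(k : ℝ) * f x - (j : ℝ) * x - round ((k : ℝ) * f x - (j : ℝ) * x)| := by
  have hk0 : (0 : ℝ) < (k : ℝ) := by exact_mod_cast hk
  have hc₂ : (0 : ℝ) < c₂ := hc₁.trans_le hc₁c₂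
  intro x hx hdist
  set g : ℝ → ℝ := fun x => (k : ℝ) * f x - (j : ℝ) * x with hgdef
  set G : ℝ → ℝ := fun x => (k : ℝ) * f' x - (j : ℝ) with hGdef
  have hβrw : |(k : ℝ) * f x₀ - (j : ℝ) * x₀ - round ((k : ℝ) * f x₀ - (j : ℝ) * x₀)|
      = |g x₀ - round (g x₀)| := rfl
  set β : ℝ := |g x₀ - round (g x₀)| with hβdef
  have hβ0 : 0 ≤ β := abs_nonneg _
  have hg : ∀ y ∈ Icc a b, HasDerivAt g (G y) y := by
    intro y hy
    have h1 := ((hder1 y hy).const_mul (k : ℝ)).sub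
      ((hasDerivAt_id y).const_mul (j : ℝ))
    simpa [hgdef, hGdef, mul_comm, Pi.sub_def] using h1
  have hG : ∀ y ∈ Icc a b, HasDerivAt G ((k : ℝ) * f'' y) y := by
    intro y hy
    simpa [hGdef] using ((hder2 y hy).const_mul (k : ℝ)).sub_const (j : ℝ)
  have hGx₀ : G x₀ = 0 := by
    simp [hGdef, hstat]
    field_simp
    ring
  -- G is monotone on Icc a b
  have hGmono : MonotoneOn G (Icc a b) :=
    monoOn_aux hG (fun y hy =>
      mul_nonneg hk0.le (hc₁.trans_le (hbounds y hy).1).le)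
  have hGneg : ∀ y ∈ Icc a b, y ≤ x₀ → G y ≤ 0 := fun y hy h =>
    hGx₀ ▸ hGmono hy hx₀ h
  have hGpos : ∀ y ∈ Icc a b, x₀ ≤ y → 0 ≤ G y := fun y hy h =>
    hGx₀ ▸ hGmono hx₀ hy h
  -- lower bound: g x₀ ≤ g x
  have hmin : g x₀ ≤ g x := by
    have := max_aux (g := fun y => -g y) (g' := fun y => -G y) hx₀
      (fun y hy => (hg y hy).neg)
      (fun y hy h => by simpa using hGneg y hy h)
      (fun y hy h => by simpa using hGpos y hy h) x hx
    have h : -g x ≤ -g x₀ := this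
    linarith
  -- upper bound via φ
  set φ : ℝ → ℝ := fun y => g y - c₂ * k / 2 * (y - x₀) ^ 2 with hφdef
  set Φ : ℝ → ℝ := fun y => G y - c₂ * k * (y - x₀) with hΦdef
  have hφ : ∀ y ∈ Icc a b, HasDerivAt φ (Φ y) y := by
    intro y hy
    have h2 : HasDerivAt (fun y => c₂ * k / 2 * (y - x₀) ^ 2)
        (c₂ * k / 2 * (2 * (y - x₀) ^ 1 * 1)) y :=
      (((hasDerivAt_id y).sub_const x₀).pow 2).const_mul _
    have := (hg y hy).sub h2
    refine this.congr_deriv ?_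
    show _ = G y - c₂ * k * (y - x₀)
    ring
  have hΦanti : AntitoneOn Φ (Icc a b) := by
    apply antiOn_aux (u' := fun y => (k : ℝ) * f'' y - c₂ * k)
    · intro y hy
      simpa [hΦdef, Pi.sub_def] using (hG y hy).sub (((hasDerivAt_id y).sub_const x₀).const_mul (c₂ * k))
    · intro y hy
      have := (hbounds y hy).2
      nlinarith
  have hΦx₀ : Φ x₀ = 0 := by simp [hΦdef, hGx₀]
  have hmax : g x - g x₀ ≤ c₂ * k / 2 * (x - x₀) ^ 2 := by
    have := max_aux (g := φ) (g' := Φ) hx₀ hφ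
      (fun y hy h => hΦx₀ ▸ hΦanti hy hx₀ h)
      (fun y hy h => hΦx₀ ▸ hΦanti hx₀ hy h) x hx
    simp only [hφdef] at this
    nlinarith [this]
  -- quantitative bound
  have hsq : (x - x₀) ^ 2 ≤ β / (c₂ * k) := by
    have h1 : |x - x₀| ^ 2 ≤ Real.sqrt (β / (c₂ * k)) ^ 2 :=
      pow_le_pow_left₀ (abs_nonneg _) hdist 2
    rwa [Real.sq_sqrt (by positivity), sq_abs] at h1
  have hhalf : g x - g x₀ ≤ β / 2 := by
    have h2 : c₂ * k / 2 * (x - x₀) ^ 2 ≤ c₂ * k / 2 * (β / (c₂ * k)) :=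
      mul_le_mul_of_nonneg_left hsq (by positivity)
    have h3 : c₂ * k / 2 * (β / (c₂ * k)) = β / 2 := by
      field_simp
    linarith
  have hfirst : |g x - g x₀| ≤ β / 2 := by
    rw [abs_of_nonneg (by linarith)]
    exact hhalf
  refine ⟨hfirst, ?_⟩
  have h1 : β ≤ |g x₀ - (round (g x) : ℝ)| := hβdef ▸ round_le (g x₀) (round (g x))
  have h2 : |g x₀ - (round (g x) : ℝ)| ≤ |g x₀ - g x| + |g x - (round (g x) : ℝ)| :=
    abs_sub_le _ _ _
  have h3 : |g x₀ - g x| = |g x - g x₀| := abs_sub_comm _ _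
  linarith
end
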